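/- arXiv:2408.05509 — 2 statements merged into one kernel-verified Lean document; each statement's English description precedes it below -/
import Mathlib

section
/- Let F be a field and A a k×(n−k) matrix over F. Then the k×n block matrix G₁ = (I_k | A) is an LCED matrix if and only if the (n−k)×n block matrix G₂ = (I_{n−k} | −Aᵀ) is an LCED matrix. -/
open Matrix

/-- The permutation matrix of `σ`: the `(i, j)` entry is `1` if `σ j = i` and `0` otherwise. -/
def permMat (F : Type*) [Zero F] [One F] {n : Type*} [DecidableEq n]
    (σ : Equiv.Perm n) : Matrix n n F :=
  Matrix.of fun i j => if σ j = i then 1 else 0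

/-- A matrix `G` over a field is an LCED matrix if there is a permutation matrix `P`
such that `G * P * Gᵀ` is invertible. -/
def IsLCEDMatrix {F : Type*} [Field F] {k n : Type*} [Fintype k] [Fintype n]
    [DecidableEq k] [DecidableEq n] (G : Matrix k n F) : Prop :=
  ∃ σ : Equiv.Perm n, IsUnit (G * permMat F σ * Gᵀ)

section lemmas

variable {F : Type*} [Field F] {n : Type*} [DecidableEq n] [Fintype n]

omit [Fintype n] in
lemma permMat_eq_submatrix (σ : Equiv.Perm n) :
    permMat F σ = (1 : Matrix n n F).submatrix id ⇑σ := by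
  ext i j
  simp only [permMat, of_apply, submatrix_apply, id_eq, one_apply]
  exact if_congr eq_comm rfl rfl

omit [Fintype n] in
lemma permMat_transpose (σ : Equiv.Perm n) :
    (permMat F σ)ᵀ = (1 : Matrix n n F).submatrix ⇑σ id := by
  ext i j
  simp only [permMat, transpose_apply, of_apply, submatrix_apply, id_eq, one_apply]

omit [Fintype n] in
lemma permMat_transpose_eq (σ : Equiv.Perm n) :
    (permMat F σ)ᵀ = permMat F σ⁻¹ := by
  ext i j
  simp only [permMat, transpose_apply, of_apply]
  refine if_congr ?_ rfl rfl
  rw [Equiv.Perm.inv_eq_iff_eq]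
  exact eq_comm

lemma permMat_mul_transpose (σ : Equiv.Perm n) :
    permMat F σ * (permMat F σ)ᵀ = 1 := by
  rw [permMat_transpose, permMat_eq_submatrix, submatrix_mul_equiv, one_mul, submatrix_id_id]

lemma permMat_transpose_mul (σ : Equiv.Perm n) :
    (permMat F σ)ᵀ * permMat F σ = 1 := by
  have h : permMat F σ = (permMat F σ⁻¹)ᵀ := by rw [permMat_transpose_eq, inv_inv]
  rw [permMat_transpose_eq, h]
  exact permMat_mul_transpose σ⁻¹

end lemmas

section key

variable {R : Type*} [Ring R] {α β : Type*} [Fintype α] [Fintype β]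
  [DecidableEq α] [DecidableEq β]

lemma toBlocks₁₂_mul (X Y : Matrix (α ⊕ β) (α ⊕ β) R) :
    toBlocks₁₂ (X * Y) = toBlocks₁₁ X * toBlocks₁₂ Y + toBlocks₁₂ X * toBlocks₂₂ Y := by
  conv_lhs => rw [← fromBlocks_toBlocks X, ← fromBlocks_toBlocks Y]
  rw [fromBlocks_multiply, toBlocks_fromBlocks₁₂]

lemma toBlocks₂₁_mul (X Y : Matrix (α ⊕ β) (α ⊕ β) R) :
    toBlocks₂₁ (X * Y) = toBlocks₂₁ X * toBlocks₁₁ Y + toBlocks₂₂ X * toBlocks₂₁ Y := by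
  conv_lhs => rw [← fromBlocks_toBlocks X, ← fromBlocks_toBlocks Y]
  rw [fromBlocks_multiply, toBlocks_fromBlocks₂₁]

lemma toBlocks₂₂_mul (X Y : Matrix (α ⊕ β) (α ⊕ β) R) :
    toBlocks₂₂ (X * Y) = toBlocks₂₁ X * toBlocks₁₂ Y + toBlocks₂₂ X * toBlocks₂₂ Y := by
  conv_lhs => rw [← fromBlocks_toBlocks X, ← fromBlocks_toBlocks Y]
  rw [fromBlocks_multiply, toBlocks_fromBlocks₂₂]

lemma key (X Y : Matrix (α ⊕ β) (α ⊕ β) R) (hXY : X * Y = 1) (hYX : Y * X = 1)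
    (hu : IsUnit (toBlocks₁₁ X)) : IsUnit (toBlocks₂₂ Y) := by
  have e12 : toBlocks₁₁ X * toBlocks₁₂ Y + toBlocks₁₂ X * toBlocks₂₂ Y = 0 := by
    have := congrArg toBlocks₁₂ hXY
    rwa [toBlocks₁₂_mul, ← fromBlocks_one, toBlocks_fromBlocks₁₂] at this
  have e22 : toBlocks₂₁ X * toBlocks₁₂ Y + toBlocks₂₂ X * toBlocks₂₂ Y = 1 := by
    have := congrArg toBlocks₂₂ hXY
    rwa [toBlocks₂₂_mul, ← fromBlocks_one, toBlocks_fromBlocks₂₂] at this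
  have f21 : toBlocks₂₁ Y * toBlocks₁₁ X + toBlocks₂₂ Y * toBlocks₂₁ X = 0 := by
    have := congrArg toBlocks₂₁ hYX
    rwa [toBlocks₂₁_mul, ← fromBlocks_one, toBlocks_fromBlocks₂₁] at this
  have f22 : toBlocks₂₁ Y * toBlocks₁₂ X + toBlocks₂₂ Y * toBlocks₂₂ X = 1 := by
    have := congrArg toBlocks₂₂ hYX
    rwa [toBlocks₂₂_mul, ← fromBlocks_one, toBlocks_fromBlocks₂₂] at this
  set a := toBlocks₁₁ X; set b := toBlocks₁₂ X; set c := toBlocks₂₁ X; set d := toBlocks₂₂ X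
  set f := toBlocks₁₂ Y; set g := toBlocks₂₁ Y; set h := toBlocks₂₂ Y
  obtain ⟨a', haa', ha'a⟩ := isUnit_iff_exists.mp hu
  have hbh : b * h = -(a * f) := by rwa [add_comm, add_eq_zero_iff_eq_neg] at e12
  have hhc : h * c = -(g * a) := by rwa [add_comm, add_eq_zero_iff_eq_neg] at f21
  set z := d - c * a' * b with hz
  have h1 : z * h = 1 := by
    have expand : z * h = d * h - c * a' * (b * h) := by
      rw [hz, sub_mul, Matrix.mul_assoc]
    rw [expand, hbh]
    have expand2 : d * h - c * a' * -(a * f) = d * h + c * (a' * a) * f := by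
      simp only [Matrix.mul_neg, mul_neg, sub_neg_eq_add, Matrix.mul_assoc]
    rw [expand2, ha'a, Matrix.mul_one, add_comm]
    exact e22
  have h2 : h * z = 1 := by
    have expand : h * z = h * d - h * c * (a' * b) := by
      simp only [hz, Matrix.mul_sub, mul_sub, Matrix.mul_assoc]
    rw [expand, hhc]
    have expand2 : h * d - -(g * a) * (a' * b) = h * d + g * (a * a') * b := by
      simp only [Matrix.neg_mul, neg_mul, sub_neg_eq_add, Matrix.mul_assoc]
    rw [expand2, haa', Matrix.mul_one, add_comm]
    exact f22
  exact ⟨⟨h, z, h2, h1⟩, rfl⟩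

end key

section aux

lemma inl_eq_swap_iff {α β : Type*} {b : β} {x : α ⊕ β} :
    Sum.inl b = Sum.swap x ↔ x = Sum.inr b := by cases x <;> simp [eq_comm]

lemma inr_eq_swap_iff {α β : Type*} {a : α} {x : α ⊕ β} :
    Sum.inr a = Sum.swap x ↔ x = Sum.inl a := by cases x <;> simp [eq_comm]

variable {F : Type*} [Field F]

lemma aux {k m : ℕ} (A : Matrix (Fin k) (Fin m) F) (σ : Equiv.Perm (Fin k ⊕ Fin m))
    (hσ : IsUnit (fromCols (1 : Matrix (Fin k) (Fin k) F) A * permMat F σ * (fromCols (1 : Matrix (Fin k) (Fin k) F) A)ᵀ)) :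
    IsLCEDMatrix (fromCols (1 : Matrix (Fin m) (Fin m) F) (-Aᵀ)) := by
  set τ : Equiv.Perm (Fin m ⊕ Fin k) :=
    (Equiv.sumComm (Fin m) (Fin k)).trans ((σ⁻¹ : Equiv.Perm _).trans
      (Equiv.sumComm (Fin k) (Fin m))) with hτ
  refine ⟨τ, ?_⟩
  set P : Matrix (Fin k ⊕ Fin m) (Fin k ⊕ Fin m) F := permMat F σ with hPdef
  have hP : P = fromBlocks (toBlocks₁₁ P) (toBlocks₁₂ P) (toBlocks₂₁ P) (toBlocks₂₂ P) :=
    (fromBlocks_toBlocks P).symm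
  have hPt : Pᵀ = fromBlocks (toBlocks₁₁ P)ᵀ (toBlocks₂₁ P)ᵀ (toBlocks₁₂ P)ᵀ (toBlocks₂₂ P)ᵀ := by
    conv_lhs => rw [hP]
    rw [fromBlocks_transpose]
  have hQ : permMat F τ =
      fromBlocks (toBlocks₂₂ P)ᵀ (toBlocks₁₂ P)ᵀ (toBlocks₂₁ P)ᵀ (toBlocks₁₁ P)ᵀ := by
    have h1 : permMat F τ = Pᵀ.submatrix Sum.swap Sum.swap := by
      ext i j
      rcases i with i | i <;> rcases j with j | j <;>
        simp [permMat, hτ, hPdef, inl_eq_swap_iff, inr_eq_swap_iff, Equiv.Perm.inv_eq_iff_eq, Equiv.Perm.eq_inv_iff_eq, Equiv.eq_symm_apply, eq_comm]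
    rw [h1, hPt, fromBlocks_submatrix_sum_swap_sum_swap]
  set U : Matrix (Fin k ⊕ Fin m) (Fin k ⊕ Fin m) F := fromBlocks 1 A 0 1 with hU
  set V : Matrix (Fin k ⊕ Fin m) (Fin k ⊕ Fin m) F := fromBlocks 1 0 Aᵀ 1 with hV
  set U' : Matrix (Fin k ⊕ Fin m) (Fin k ⊕ Fin m) F := fromBlocks 1 (-A) 0 1 with hU'
  set V' : Matrix (Fin k ⊕ Fin m) (Fin k ⊕ Fin m) F := fromBlocks 1 0 (-Aᵀ) 1 with hV'
  have hUU' : U * U' = 1 := by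
    rw [hU, hU', fromBlocks_multiply]
    simp [fromBlocks_one]
  have hU'U : U' * U = 1 := by
    rw [hU, hU', fromBlocks_multiply]
    simp [fromBlocks_one]
  have hVV' : V * V' = 1 := by
    rw [hV, hV', fromBlocks_multiply]
    simp [fromBlocks_one]
  have hV'V : V' * V = 1 := by
    rw [hV, hV', fromBlocks_multiply]
    simp [fromBlocks_one]
  have hXY : (U * P * V) * (V' * Pᵀ * U') = 1 := by
    calc (U * P * V) * (V' * Pᵀ * U') = U * (P * ((V * V') * (Pᵀ * U'))) := by
          simp only [Matrix.mul_assoc]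
      _ = U * ((P * Pᵀ) * U') := by rw [hVV', Matrix.one_mul, Matrix.mul_assoc]
      _ = U * U' := by rw [permMat_mul_transpose, Matrix.one_mul]
      _ = 1 := hUU'
  have hYX : (V' * Pᵀ * U') * (U * P * V) = 1 := by
    calc (V' * Pᵀ * U') * (U * P * V) = V' * (Pᵀ * ((U' * U) * (P * V))) := by
          simp only [Matrix.mul_assoc]
      _ = V' * ((Pᵀ * P) * V) := by rw [hU'U, Matrix.one_mul, Matrix.mul_assoc]
      _ = V' * V := by rw [permMat_transpose_mul, Matrix.one_mul]
      _ = 1 := hV'V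
  have hX11 : toBlocks₁₁ (U * P * V) = fromCols (1 : Matrix (Fin k) (Fin k) F) A * P * (fromCols (1 : Matrix (Fin k) (Fin k) F) A)ᵀ := by
    conv_lhs => rw [hP]
    rw [hU, hV, fromBlocks_multiply, fromBlocks_multiply, toBlocks_fromBlocks₁₁]
    conv_rhs => rw [hP]
    rw [transpose_fromCols, fromCols_mul_fromBlocks, fromCols_mul_fromRows]
    simp only [Matrix.one_mul, Matrix.mul_one, Matrix.zero_mul, Matrix.mul_zero,
      add_zero, zero_add, transpose_one, Matrix.add_mul, Matrix.mul_add]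
    try abel
  have hY22 : toBlocks₂₂ (V' * Pᵀ * U') =
      fromCols (1 : Matrix (Fin m) (Fin m) F) (-Aᵀ) * permMat F τ * (fromCols (1 : Matrix (Fin m) (Fin m) F) (-Aᵀ))ᵀ := by
    conv_lhs => rw [hPt]
    rw [hV', hU', fromBlocks_multiply, fromBlocks_multiply, toBlocks_fromBlocks₂₂]
    rw [hQ, transpose_fromCols, fromCols_mul_fromBlocks, fromCols_mul_fromRows]
    simp only [Matrix.one_mul, Matrix.mul_one, Matrix.zero_mul, Matrix.mul_zero,
      add_zero, zero_add, transpose_one, Matrix.add_mul, Matrix.mul_add,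
      Matrix.neg_mul, Matrix.mul_neg, neg_neg, transpose_neg, transpose_transpose]
    try abel
  have := key (U * P * V) (V' * Pᵀ * U') hXY hYX (by rwa [hX11])
  rwa [hY22] at this

end aux

/-- `(I_k | A)` is an LCED matrix iff `(I_{n-k} | -Aᵀ)` is an LCED matrix. -/
theorem stmt5 {F : Type*} [Field F] {k m : ℕ} (A : Matrix (Fin k) (Fin m) F) :
    IsLCEDMatrix (fromCols (1 : Matrix (Fin k) (Fin k) F) A) ↔
    IsLCEDMatrix (fromCols (1 : Matrix (Fin m) (Fin m) F) (-Aᵀ)) := by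
  constructor
  · rintro ⟨σ, hσ⟩
    exact aux A σ hσ
  · rintro ⟨σ, hσ⟩
    have := aux (-Aᵀ) σ hσ
    simpa using this
end

section
/- Let F be a field and A a k×(n−k) matrix over F such that the block matrix G = (I_k | A) is not an LCED matrix. Let Q be any (n−k)×(n−k) permutation matrix and set M = A·Q·Aᵀ. Then for every k×k permutation matrix P', we have det(I_k + P'·M) = 0 and det(I_k + M·P') = 0; in other words, −1 is an eigenvalue of every row permutation and every column permutation of M. -/
open Matrix

lemma permMat_mul {F : Type*} [NonAssocSemiring F] {n : Type*} [DecidableEq n] [Fintype n]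
    (σ τ : Equiv.Perm n) : permMat F σ * permMat F τ = permMat F (σ * τ) := by
  ext i j
  simp only [permMat, Matrix.mul_apply, Matrix.of_apply]
  rw [Finset.sum_eq_single (τ j)]
  · simp [Equiv.Perm.mul_apply]
    split_ifs with h1 <;> split_ifs with h2 <;> simp_all <;> exact absurd h1 h2
  · intro b _ hb; simp [hb.symm]
  · simp

lemma permMat_one {F : Type*} [Zero F] [One F] {n : Type*} [DecidableEq n] :
    permMat F (1 : Equiv.Perm n) = 1 := by
  ext i j
  simp [permMat, Matrix.one_apply, eq_comm]

lemma permMat_sumCongr {F : Type*} [Zero F] [One F] {n p : Type*} [DecidableEq n] [DecidableEq p]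
    (τ : Equiv.Perm n) (Q : Equiv.Perm p) :
    permMat F (Equiv.sumCongr τ Q)
      = fromBlocks (permMat F τ) 0 0 (permMat F Q) := by
  ext i j
  cases i <;> cases j <;> simp [permMat, fromBlocks]

lemma key_s10 {F : Type*} [Field F] {k m : ℕ} (A : Matrix (Fin k) (Fin m) F)
    (h : ¬ IsLCEDMatrix (fromCols (1 : Matrix (Fin k) (Fin k) F) A))
    (Q : Equiv.Perm (Fin m)) (τ : Equiv.Perm (Fin k)) :
    (permMat F τ + A * permMat F Q * Aᵀ).det = 0 := by
  by_contra hd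
  apply h
  refine ⟨Equiv.sumCongr τ Q, ?_⟩
  rw [permMat_sumCongr, fromCols_mul_fromBlocks, transpose_fromCols,
    fromCols_mul_fromRows]
  rw [Matrix.isUnit_iff_isUnit_det]
  simp only [Matrix.mul_zero, add_zero, zero_add, Matrix.one_mul, Matrix.mul_one, Matrix.transpose_one]
  exact isUnit_iff_ne_zero.mpr hd

/-- if `(I_k | A)` is not an LCED matrix then, with `M = A·Q·Aᵀ` for any
permutation matrix `Q`, every row permutation and column permutation of `M` has `-1` as
an eigenvalue, i.e. `det(I + P'·M) = 0 = det(I + M·P')` for every permutation matrix `P'`. -/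
theorem stmt10 {F : Type*} [Field F] {k m : ℕ} (A : Matrix (Fin k) (Fin m) F)
    (h : ¬ IsLCEDMatrix (fromCols (1 : Matrix (Fin k) (Fin k) F) A))
    (Q : Equiv.Perm (Fin m)) (P' : Equiv.Perm (Fin k)) :
    ((1 : Matrix (Fin k) (Fin k) F) + permMat F P' * (A * permMat F Q * Aᵀ)).det = 0 ∧
    ((1 : Matrix (Fin k) (Fin k) F) + (A * permMat F Q * Aᵀ) * permMat F P').det = 0 := by
  constructor
  · have : (1 : Matrix (Fin k) (Fin k) F) + permMat F P' * (A * permMat F Q * Aᵀ)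
        = permMat F P' * (permMat F P'⁻¹ + A * permMat F Q * Aᵀ) := by
      rw [Matrix.mul_add, permMat_mul, mul_inv_cancel, permMat_one]
    rw [this, Matrix.det_mul, key_s10 A h Q P'⁻¹, mul_zero]
  · have : (1 : Matrix (Fin k) (Fin k) F) + (A * permMat F Q * Aᵀ) * permMat F P'
        = (permMat F P'⁻¹ + A * permMat F Q * Aᵀ) * permMat F P' := by
      rw [Matrix.add_mul, permMat_mul, inv_mul_cancel, permMat_one]
    rw [this, Matrix.det_mul, key_s10 A h Q P'⁻¹, zero_mul]
end
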